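/- arXiv:1901.06517 — 4 statements merged into one kernel-verified Lean document; each statement's English description precedes it below -/
import Mathlib

section
/- Let M₀, M₁, …, M_n be nonempty convex subsets of a Banach space Z with M_j open for j = 1,…,n. Then M₀ ∩ M₁ ∩ ⋯ ∩ M_n = ∅ if and only if there exist z₀*, z₁*, …, z_n* ∈ Z*, not all zero, such that z₀* + z₁* + ⋯ + z_n* = 0 and Σ_{j=0}^n inf_{z ∈ M_j} z_j*(z) ≥ 0. -/
/-- Dubovitskii–Milyutin type separation: nonempty convex sets `M₀, M₁, …, M_n` with
`M₁, …, M_n` open have empty intersection iff there exist continuous linear functionals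
`z₀*, …, z_n*`, not all zero, summing to `0`, with `Σ_j inf_{M_j} z_j* ≥ 0`
(expressed via finite lower bounds `c j ≤ z_j*` on `M j` with `Σ c j ≥ 0`). -/
theorem iInter_empty_iff_separation
    {Z : Type*} [NormedAddCommGroup Z] [NormedSpace ℝ Z]
    (n : ℕ) (M : Fin (n + 1) → Set Z)
    (hne : ∀ j, (M j).Nonempty) (hconv : ∀ j, Convex ℝ (M j))
    (hopen : ∀ j : Fin (n + 1), j ≠ 0 → IsOpen (M j)) :
    (⋂ j, M j) = ∅ ↔
      ∃ f : Fin (n + 1) → (Z →L[ℝ] ℝ), (∃ j, f j ≠ 0) ∧ (∑ j, f j) = 0 ∧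
        ∃ c : Fin (n + 1) → ℝ, (∀ j, ∀ z ∈ M j, c j ≤ f j z) ∧ 0 ≤ ∑ j, c j := by
  constructor
  · intro h
    -- the set A ⊆ (Fin n → Z)
    set A : Set (Fin n → Z) := {x | ∃ z ∈ M 0, ∀ i : Fin n, z - x i ∈ M i.succ} with hA
    have hA_open : IsOpen A := by
      have : A = ⋃ z ∈ M 0, ((fun (x : Fin n → Z) (i : Fin n) => z - x i) ⁻¹'
          Set.univ.pi (fun i => M i.succ)) := by
        ext x
        simp [hA, Set.mem_pi]
      rw [this]
      refine isOpen_biUnion fun z _ => ?_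
      refine IsOpen.preimage ?_ (isOpen_set_pi Set.finite_univ fun i _ =>
        hopen i.succ (Fin.succ_ne_zero i))
      exact continuous_pi fun i => continuous_const.sub (continuous_apply i)
    have hA_conv : Convex ℝ A := by
      rintro x ⟨z, hz, hx⟩ x' ⟨z', hz', hx'⟩ a b ha hb hab
      refine ⟨a • z + b • z', hconv 0 hz hz' ha hb hab, fun i => ?_⟩
      have : (a • z + b • z') - (a • x + b • x') i = a • (z - x i) + b • (z' - x' i) := by
        simp [smul_sub]; abel
      rw [this]
      exact hconv i.succ (hx i) (hx' i) ha hb hab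
    have h0A : (0 : Fin n → Z) ∉ A := by
      rintro ⟨z, hz, hzi⟩
      have hz' : z ∈ ⋂ j, M j := by
        refine Set.mem_iInter.2 fun j => ?_
        refine Fin.cases hz (fun i => ?_) j
        simpa using hzi i
      rw [h] at hz'
      exact hz'
    obtain ⟨f, hf⟩ := geometric_hahn_banach_open_point hA_conv hA_open h0A
    have hf0 : f 0 = 0 := map_zero f
    -- component functionals
    set g : Fin n → (Z →L[ℝ] ℝ) := fun i =>
      f.comp ⟨LinearMap.single ℝ (fun _ => Z) i, by exact (continuous_single (A := fun _ : Fin n => Z) i)⟩ with hg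
    have hdecomp : ∀ x : Fin n → Z, f x = ∑ i, g i (x i) := by
      intro x
      conv_lhs => rw [← Finset.univ_sum_single x]
      rw [map_sum]
      rfl
    set F : Fin (n + 1) → (Z →L[ℝ] ℝ) := Fin.cases (-(∑ i, g i)) g with hF
    have hF0 : F 0 = -(∑ i, g i) := rfl
    have hFs : ∀ i : Fin n, F i.succ = g i := fun i => by simp [hF]
    have hFsum : (∑ j, F j) = 0 := by
      rw [Fin.sum_univ_succ]
      simp [hF0, hFs]
    have key : ∀ w : Fin (n + 1) → Z, (∀ j, w j ∈ M j) → 0 < ∑ j, F j (w j) := by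
      intro w hw
      have hmem : (fun i : Fin n => w 0 - w i.succ) ∈ A := by
        refine ⟨w 0, hw 0, fun i => ?_⟩
        simpa using hw i.succ
      have hlt : f (fun i : Fin n => w 0 - w i.succ) < 0 := by
        have := hf _ hmem
        rwa [hf0] at this
      rw [hdecomp] at hlt
      have hs : ∑ j, F j (w j) = F 0 (w 0) + ∑ i, g i (w i.succ) := by
        rw [Fin.sum_univ_succ]
        simp [hFs]
      have hF0w : F 0 (w 0) = -∑ i, g i (w 0) := by
        simp [hF0, ContinuousLinearMap.sum_apply]
      have : ∑ i, g i (w 0 - w i.succ) = ∑ i, g i (w 0) - ∑ i, g i (w i.succ) := by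
        simp [map_sub, Finset.sum_sub_distrib]
      rw [this] at hlt
      rw [hs, hF0w]
      linarith
    have hFne : ∃ j, F j ≠ 0 := by
      by_contra hcon
      push_neg at hcon
      obtain ⟨x, hxA⟩ : A.Nonempty := by
        obtain ⟨z, hz⟩ := hne 0
        exact ⟨fun i => z - (hne i.succ).choose, z, hz, fun i => by
          simpa using (hne i.succ).choose_spec⟩
      have hfx := hf x hxA
      rw [hf0, hdecomp] at hfx
      have : ∀ i : Fin n, g i = 0 := fun i => by rw [← hFs i]; exact hcon i.succ
      simp [this] at hfx
    -- the constants
    set w₀ : ∀ j, Z := fun j => (hne j).choose with hw₀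
    have hw₀m : ∀ j, w₀ j ∈ M j := fun j => (hne j).choose_spec
    have hbdd : ∀ j, BddBelow ((fun z => F j z) '' M j) := by
      intro j
      refine ⟨-∑ k ∈ Finset.univ \ {j}, F k (w₀ k), ?_⟩
      rintro r ⟨z, hz, rfl⟩
      have hupd : ∀ k, Function.update w₀ j z k ∈ M k := by
        intro k
        by_cases hk : k = j
        · subst hk; simpa using hz
        · simpa [Function.update_of_ne hk] using hw₀m k
      have := key _ hupd
      have heq : ∑ k, F k (Function.update w₀ j z k)
          = F j z + ∑ k ∈ Finset.univ \ {j}, F k (w₀ k) := by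
        have : (fun k => F k (Function.update w₀ j z k))
            = Function.update (fun k => F k (w₀ k)) j (F j z) := by
          funext k
          by_cases hk : k = j
          · subst hk; simp
          · simp [Function.update_of_ne hk]
        rw [this, Finset.sum_update_of_mem (Finset.mem_univ j)]
      rw [heq] at this
      linarith
    set c : Fin (n + 1) → ℝ := fun j => sInf ((fun z => F j z) '' M j) with hc
    have hcle : ∀ j, ∀ z ∈ M j, c j ≤ F j z := fun j z hz =>
      csInf_le (hbdd j) ⟨z, hz, rfl⟩
    have hcsum : 0 ≤ ∑ j, c j := by
      by_contra hcon
      push_neg at hcon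
      set ε : ℝ := (-∑ j, c j) / (n + 1) with hε
      have hεpos : 0 < ε := by
        apply div_pos (by linarith) (by positivity)
      have hex : ∀ j, ∃ z ∈ M j, F j z < c j + ε := by
        intro j
        obtain ⟨a, ⟨z, hz, rfl⟩, ha⟩ := Real.lt_sInf_add_pos
          (s := (fun z => F j z) '' M j) ⟨F j (w₀ j), ⟨w₀ j, hw₀m j, rfl⟩⟩ hεpos
        exact ⟨z, hz, ha⟩
      choose w hwm hwlt using hex
      have hk := key w hwm
      have hsum_lt : ∑ j, F j (w j) < ∑ j, (c j + ε) :=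
        Finset.sum_lt_sum_of_nonempty Finset.univ_nonempty fun j _ => hwlt j
      have : ∑ j : Fin (n + 1), (c j + ε) = 0 := by
        rw [Finset.sum_add_distrib, Finset.sum_const, Finset.card_univ]
        simp only [Fintype.card_fin, nsmul_eq_mul, hε]
        field_simp
        push_cast; ring
      linarith
    exact ⟨F, hFne, hFsum, c, hcle, hcsum⟩
  · rintro ⟨f, ⟨j₀, hj₀⟩, hsum, c, hcle, hcsum⟩
    rw [Set.eq_empty_iff_forall_notMem]
    intro z hz
    rw [Set.mem_iInter] at hz
    have hz0 : ∑ j, f j z = 0 := by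
      have : (∑ j, f j) z = 0 := by rw [hsum]; rfl
      rwa [ContinuousLinearMap.sum_apply] at this
    have heq : ∀ j, f j z = c j := by
      have hle : ∀ j ∈ Finset.univ, c j ≤ f j z := fun j _ => hcle j z (hz j)
      have hsle : ∑ j, c j = ∑ j, f j z := le_antisymm
        (Finset.sum_le_sum hle) (by rw [hz0]; exact hcsum)
      intro j
      exact (Finset.sum_eq_sum_iff_of_le hle).1 hsle j (Finset.mem_univ j) |>.symm
    -- find a nonzero functional with nonzero index
    obtain ⟨j, hjne, hj⟩ : ∃ j, j ≠ 0 ∧ f j ≠ 0 := by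
      by_contra hcon
      push_neg at hcon
      by_cases h0 : j₀ = 0
      · subst h0
        have hz' : ∀ i : Fin n, f i.succ = 0 := fun i => hcon i.succ (Fin.succ_ne_zero i)
        have : (∑ j, f j) = f 0 := by
          rw [Fin.sum_univ_succ]; simp [hz']
        rw [hsum] at this
        exact hj₀ this.symm
      · exact hj₀ (hcon j₀ h0)
    obtain ⟨v, hv⟩ : ∃ v, f j v < 0 := by
      have : ∃ u, f j u ≠ 0 := by
        by_contra hcon
        push_neg at hcon
        exact hj (ContinuousLinearMap.ext fun u => by simp [hcon u])
      obtain ⟨u, hu⟩ := this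
      rcases lt_or_gt_of_ne hu with h | h
      · exact ⟨u, h⟩
      · exact ⟨-u, by simpa using neg_neg_iff_pos.2 h⟩
    have hcont : Continuous fun t : ℝ => z + t • v :=
      continuous_const.add (continuous_id.smul continuous_const)
    have hmem : (fun t : ℝ => z + t • v) ⁻¹' M j ∈ nhds (0 : ℝ) := by
      apply hcont.continuousAt.preimage_mem_nhds
      exact ((hopen j hjne).mem_nhds (by simpa using hz j))
    obtain ⟨ε, hεpos, hεb⟩ := Metric.mem_nhds_iff.1 hmem
    have htm : z + (ε / 2) • v ∈ M j := by
      apply hεb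
      simp [abs_of_pos, hεpos, half_lt_self hεpos, abs_of_nonneg (le_of_lt (half_pos hεpos))]
    have h1 : c j ≤ f j (z + (ε / 2) • v) := hcle j _ htm
    have h2 : f j (z + (ε / 2) • v) = f j z + (ε / 2) * f j v := by
      simp
    have := heq j
    nlinarith [half_pos hεpos]
end

section
/- Let (Ξ, Σ, μ) be a complete σ-finite measure space, Z̃ a separable Banach space, K ⊆ Z̃ a nonempty closed set, and φ : Ξ → Z̃ a Σ-measurable map. Then the metric projection map ξ ↦ Π_K(φ(ξ)) := {y ∈ K : ‖y − φ(ξ)‖ = dist(φ(ξ), K)} is a Σ-measurable set-valued map; if Π_K(φ(ξ)) ≠ ∅ for every ξ, there exists a Σ-measurable selection ψ : Ξ → Z̃ with ‖ψ(ξ) − φ(ξ)‖ = dist(φ(ξ), K) for μ-a.e. ξ. -/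
open MeasureTheory Metric Set Topology Filter
open scoped ENNReal NNReal

set_option linter.unusedSectionVars false

section AuxMeas

lemma iInter_closure_image_subset {Z : Type*} [MetricSpace Z]
    (f : (ℕ → ℕ) → Z) (hf : Continuous f) (σ : ℕ → ℕ) :
    (⋂ n, closure (f '' {x | ∀ i < n, x i ≤ σ i})) ⊆ f '' {x | ∀ i, x i ≤ σ i} := by
  intro y hy
  simp only [Set.mem_iInter] at hy
  have hx : ∀ n : ℕ, ∃ x : ℕ → ℕ, (∀ i < n, x i ≤ σ i) ∧ dist y (f x) < 1 / (n + 1) := by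
    intro n
    have hpos : (0 : ℝ) < 1 / (n + 1) := by positivity
    obtain ⟨b, hb, hd⟩ := Metric.mem_closure_iff.mp (hy n) _ hpos
    obtain ⟨x, hxmem, rfl⟩ := hb
    exact ⟨x, hxmem, hd⟩
  choose x hxle hxd using hx
  set τ : ℕ → ℕ := fun i => max (σ i) ((Finset.range (i + 1)).sup (fun n => x n i)) with hτ
  have hxτ : ∀ n, x n ∈ {z : ℕ → ℕ | ∀ i, z i ≤ τ i} := by
    intro n i
    rcases lt_or_ge i n with h | h
    · exact le_max_of_le_left (hxle n i h)
    · exact le_max_of_le_right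
        (Finset.le_sup (f := fun n => x n i) (Finset.mem_range.mpr (by omega)))
  have hcomp : IsCompact {z : ℕ → ℕ | ∀ i, z i ≤ τ i} := by
    have h : {z : ℕ → ℕ | ∀ i, z i ≤ τ i} = Set.pi univ (fun i => Set.Iic (τ i)) := by
      ext z; simp [Set.mem_pi, Pi.le_def]
    rw [h]; exact isCompact_univ_pi (fun i => (Set.finite_Iic _).isCompact)
  obtain ⟨a, ha, φ, hφ, hconv⟩ := hcomp.tendsto_subseq hxτ
  refine ⟨a, ?_, ?_⟩
  · -- a ∈ cube σ
    intro i
    have h1 : Tendsto (fun j => x (φ j) i) atTop (𝓝 (a i)) :=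
      ((continuous_apply i).tendsto a).comp hconv
    have h2 : ∀ᶠ j in atTop, x (φ j) i = a i := by
      rw [nhds_discrete] at h1
      exact tendsto_pure.mp h1
    have h3 : ∀ᶠ j in atTop, i < φ j :=
      eventually_atTop.mpr ⟨i + 1, fun j hj => lt_of_lt_of_le (by omega) hφ.le_apply⟩
    obtain ⟨j, hji, hjφ⟩ := (h2.and h3).exists
    rw [← hji]
    exact hxle (φ j) i hjφ
  · -- f a = y
    have hfa : Tendsto (fun j => f (x (φ j))) atTop (𝓝 (f a)) := (hf.tendsto a).comp hconv
    have hfy : Tendsto (fun j => f (x (φ j))) atTop (𝓝 y) := by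
      rw [tendsto_iff_dist_tendsto_zero]
      refine squeeze_zero (g := fun j : ℕ => 1 / (j + 1)) (fun j => dist_nonneg) (fun j => ?_) ?_
      · show dist (f (x (φ j))) y ≤ 1 / (j + 1)
        rw [dist_comm]
        refine le_trans (le_of_lt (hxd (φ j))) ?_
        apply one_div_le_one_div_of_le (by positivity)
        have h5 : (j : ℝ) ≤ (φ j : ℝ) := Nat.cast_le.mpr hφ.le_apply
        linarith
      · exact tendsto_one_div_add_atTop_nhds_zero_nat
    exact tendsto_nhds_unique hfa hfy

lemma compact_cube (τ : ℕ → ℕ) : IsCompact {x : ℕ → ℕ | ∀ i, x i ≤ τ i} := by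
  have h : {x : ℕ → ℕ | ∀ i, x i ≤ τ i} = Set.pi univ (fun i => Set.Iic (τ i)) := by
    ext x; simp [Set.mem_pi, Pi.le_def]
  rw [h]; exact isCompact_univ_pi (fun i => (Set.finite_Iic _).isCompact)

lemma range_inner_regular {Z : Type*} [MetricSpace Z] [MeasurableSpace Z]
    [OpensMeasurableSpace Z] (f : (ℕ → ℕ) → Z) (hf : Continuous f)
    (ν : Measure Z) [IsFiniteMeasure ν] {ε : ℝ≥0∞} (hε : ε ≠ 0) :
    ∃ C, IsCompact C ∧ C ⊆ Set.range f ∧ ν (Set.range f) ≤ ν C + ε := by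
  -- step choice
  have key : ∀ (n : ℕ) (g : ℕ → ℕ), ∃ k : ℕ,
      ν (f '' {x | ∀ i < n, x i ≤ g i})
        ≤ ν (f '' {x | (∀ i < n, x i ≤ g i) ∧ x n ≤ k}) + ε / 2 ^ (n + 1) := by
    intro n g
    set s : ℕ → Set Z := fun k => f '' {x | (∀ i < n, x i ≤ g i) ∧ x n ≤ k} with hs
    have hmono : Monotone s := by
      intro k l hkl
      exact Set.image_mono (fun x hx => ⟨hx.1, hx.2.trans hkl⟩)
    have hunion : (⋃ k, s k) = f '' {x | ∀ i < n, x i ≤ g i} := by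
      apply Set.Subset.antisymm
      · exact Set.iUnion_subset fun k => Set.image_mono (fun x hx => hx.1)
      · rintro z ⟨x, hx, rfl⟩
        exact Set.mem_iUnion.mpr ⟨x n, ⟨x, ⟨hx, le_refl _⟩, rfl⟩⟩
    have hsup : ν (f '' {x | ∀ i < n, x i ≤ g i}) = ⨆ k, ν (s k) := by
      rw [← hunion]
      exact (hmono.directed_le).measure_iUnion
    rcases eq_or_ne (ν (f '' {x | ∀ i < n, x i ≤ g i})) 0 with h0 | h0
    · exact ⟨0, by rw [h0]; exact zero_le⟩
    have hlt : ν (f '' {x | ∀ i < n, x i ≤ g i}) - ε / 2 ^ (n + 1)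
        < ν (f '' {x | ∀ i < n, x i ≤ g i}) :=
      ENNReal.sub_lt_self (measure_ne_top ν _) h0
        (ENNReal.div_pos hε (ENNReal.pow_ne_top ENNReal.ofNat_ne_top)).ne'
    nth_rewrite 2 [hsup] at hlt
    obtain ⟨k, hk⟩ := lt_iSup_iff.mp hlt
    exact ⟨k, tsub_le_iff_right.mp hk.le⟩
  choose c hc using key
  -- recursive construction of the bounding sequence
  set N : ℕ → (ℕ → ℕ) := fun n =>
    Nat.rec (fun _ => 0) (fun k Nk => Function.update Nk k (c k Nk)) n with hN
  have hNsucc : ∀ k, N (k + 1) = Function.update (N k) k (c k (N k)) := fun _ => rfl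
  set σ : ℕ → ℕ := fun i => N (i + 1) i with hσ
  have hagree : ∀ n i, i < n → N n i = σ i := by
    intro n
    induction n with
    | zero => intro i hi; omega
    | succ n ih =>
      intro i hi
      rcases eq_or_ne i n with rfl | hne
      · rfl
      · have h1 : N (n + 1) i = N n i := by rw [hNsucc]; exact Function.update_of_ne hne _ _
        rw [h1, ih i (by omega)]
  have hSn : ∀ n, {x : ℕ → ℕ | ∀ i < n, x i ≤ N n i} = {x | ∀ i < n, x i ≤ σ i} := by
    intro n; ext x
    simp only [Set.mem_setOf_eq]
    exact ⟨fun h i hi => (hagree n i hi) ▸ h i hi, fun h i hi => (hagree n i hi).symm ▸ h i hi⟩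
  -- invariant
  have hinv : ∀ n, ν (Set.range f)
      ≤ ν (f '' {x | ∀ i < n, x i ≤ σ i}) + ∑ i ∈ Finset.range n, ε / 2 ^ (i + 1) := by
    intro n
    induction n with
    | zero =>
      simp only [Finset.range_zero, Finset.sum_empty, add_zero]
      have : {x : ℕ → ℕ | ∀ i < 0, x i ≤ σ i} = univ := by ext x; simp
      rw [this, Set.image_univ]
    | succ n ih =>
      have hstep := hc n (N n)
      have he1 : {x : ℕ → ℕ | (∀ i < n, x i ≤ N n i) ∧ x n ≤ c n (N n)}
          = {x | ∀ i < n + 1, x i ≤ σ i} := by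
        ext x
        simp only [Set.mem_setOf_eq]
        constructor
        · rintro ⟨h1, h2⟩ i hi
          rcases eq_or_ne i n with rfl | hne
          · show x i ≤ σ i
            rw [hσ]
            simp only []
            rw [hNsucc, Function.update_self]
            exact h2
          · rw [← hagree n i (by omega)]
            exact h1 i (by omega)
        · intro h
          have h2 : x n ≤ N (n + 1) n := h n (by omega)
          rw [hNsucc, Function.update_self] at h2
          exact ⟨fun i hi => by rw [hagree n i hi]; exact h i (by omega), h2⟩
      rw [hSn n, he1] at hstep
      calc ν (Set.range f)
          ≤ ν (f '' {x | ∀ i < n, x i ≤ σ i}) + ∑ i ∈ Finset.range n, ε / 2 ^ (i + 1) := ih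
        _ ≤ (ν (f '' {x | ∀ i < n + 1, x i ≤ σ i}) + ε / 2 ^ (n + 1))
              + ∑ i ∈ Finset.range n, ε / 2 ^ (i + 1) := add_le_add_left hstep _
        _ = ν (f '' {x | ∀ i < n + 1, x i ≤ σ i}) + ∑ i ∈ Finset.range (n + 1), ε / 2 ^ (i + 1) := by
            rw [Finset.sum_range_succ]; ring
  -- geometric series bound
  have hgeom : ∀ n, (∑ i ∈ Finset.range n, ε / 2 ^ (i + 1)) ≤ ε := by
    intro n
    have h1 : (∑ i ∈ Finset.range n, ε / 2 ^ (i + 1)) ≤ ∑' i : ℕ, ε / 2 ^ (i + 1) :=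
      ENNReal.sum_le_tsum _
    refine h1.trans ?_
    have h2 : ∑' i : ℕ, ε / 2 ^ (i + 1) = ε * ∑' i : ℕ, (2⁻¹ : ℝ≥0∞) ^ (i + 1) := by
      rw [← ENNReal.tsum_mul_left]
      congr 1 with i
      rw [ENNReal.div_eq_inv_mul, mul_comm, ← ENNReal.inv_pow]
    rw [h2]
    have h3 : ∑' i : ℕ, (2⁻¹ : ℝ≥0∞) ^ (i + 1) = 1 := by
      have := ENNReal.tsum_geometric (2⁻¹ : ℝ≥0∞)
      calc ∑' i : ℕ, (2⁻¹ : ℝ≥0∞) ^ (i + 1) = 2⁻¹ * ∑' i : ℕ, (2⁻¹ : ℝ≥0∞) ^ i := by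
            rw [← ENNReal.tsum_mul_left]; congr 1 with i; rw [pow_succ, mul_comm]
        _ = 2⁻¹ * (1 - 2⁻¹)⁻¹ := by rw [this]
        _ = 1 := by
            rw [ENNReal.one_sub_inv_two, inv_inv]
            exact ENNReal.inv_mul_cancel two_ne_zero ENNReal.ofNat_ne_top
    rw [h3, mul_one]
  -- closures
  set Cl : ℕ → Set Z := fun n => closure (f '' {x | ∀ i < n, x i ≤ σ i}) with hCl
  have hClanti : Antitone Cl := by
    intro m n hmn
    exact closure_mono (Set.image_mono (fun x hx i hi => hx i (lt_of_lt_of_le hi hmn)))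
  have hClmeas : ∀ n, NullMeasurableSet (Cl n) ν :=
    fun n => (isClosed_closure.measurableSet).nullMeasurableSet
  have hiInter : ν (⋂ n, Cl n) = ⨅ n, ν (Cl n) :=
    hClanti.measure_iInter hClmeas ⟨0, measure_ne_top ν _⟩
  have hbound : ν (Set.range f) ≤ ν (⋂ n, Cl n) + ε := by
    rw [hiInter]
    rw [← tsub_le_iff_right]
    refine le_iInf fun n => ?_
    rw [tsub_le_iff_right]
    calc ν (Set.range f) ≤ ν (f '' {x | ∀ i < n, x i ≤ σ i}) + ∑ i ∈ Finset.range n, ε / 2 ^ (i + 1) :=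
          hinv n
      _ ≤ ν (Cl n) + ε := add_le_add (measure_mono subset_closure) (hgeom n)
  refine ⟨f '' {x | ∀ i, x i ≤ σ i}, (compact_cube σ).image hf, Set.image_subset_range _ _, ?_⟩
  exact hbound.trans (add_le_add_left (measure_mono (iInter_closure_image_subset f hf σ)) ε)

lemma analyticSet_nullMeasurable {Z : Type*} [MetricSpace Z] [MeasurableSpace Z]
    [OpensMeasurableSpace Z] {G : Set Z} (hG : MeasureTheory.AnalyticSet G)
    (ν : Measure Z) [IsFiniteMeasure ν] : NullMeasurableSet G ν := by
  rw [MeasureTheory.AnalyticSet] at hG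
  rcases hG with rfl | ⟨f, hf, rfl⟩
  · exact MeasurableSet.empty.nullMeasurableSet
  -- inner regularity gives a Borel subset of full outer measure
  have hC : ∀ m : ℕ, ∃ C, IsCompact C ∧ C ⊆ Set.range f ∧
      ν (Set.range f) ≤ ν C + (m + 1 : ℝ≥0∞)⁻¹ :=
    fun m => range_inner_regular f hf ν (by simp)
  choose C hCcomp hCsub hCν using hC
  set S : Set Z := ⋃ m, C m with hS
  have hSmeas : MeasurableSet S :=
    MeasurableSet.iUnion fun m => (hCcomp m).isClosed.measurableSet
  have hSsub : S ⊆ Set.range f := Set.iUnion_subset hCsub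
  have hle : ν (Set.range f) ≤ ν S := by
    refine ENNReal.le_of_forall_pos_le_add fun δ hδ _ => ?_
    obtain ⟨m, hm⟩ := exists_nat_gt (δ : ℝ≥0)⁻¹
    have h1 : ((m : ℝ≥0∞) + 1)⁻¹ ≤ (δ : ℝ≥0∞) := by
      rw [← inv_inv (a := (δ : ℝ≥0∞))]
      apply ENNReal.inv_le_inv.mpr
      rw [← ENNReal.coe_inv hδ.ne']
      calc ((δ⁻¹ : ℝ≥0) : ℝ≥0∞) ≤ (m : ℝ≥0∞) := by exact_mod_cast hm.le
        _ ≤ (m : ℝ≥0∞) + 1 := le_self_add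
    calc ν (Set.range f) ≤ ν (C m) + (m + 1 : ℝ≥0∞)⁻¹ := hCν m
      _ ≤ ν S + δ := add_le_add (measure_mono (Set.subset_iUnion _ m)) h1
  -- conclude null measurability
  set H := toMeasurable ν (Set.range f) with hH
  have hnull : ν (Set.range f \ S) = 0 := by
    have h2 : Set.range f \ S ⊆ H \ S := Set.diff_subset_diff_left (subset_toMeasurable ν _)
    refine le_antisymm (le_trans (measure_mono h2) ?_) zero_le
    rw [measure_diff (hSsub.trans (subset_toMeasurable ν _)) hSmeas.nullMeasurableSet
      (measure_ne_top ν S)]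
    rw [measure_toMeasurable]
    exact tsub_le_iff_right.mpr (by simpa using hle)
  have heq : Set.range f = S ∪ (Set.range f \ S) := (Set.union_diff_cancel hSsub).symm
  rw [heq]
  exact hSmeas.nullMeasurableSet.union (NullMeasurableSet.of_null hnull)

lemma measurableSet_preimage_analytic {Z : Type*} [MetricSpace Z] [MeasurableSpace Z]
    [OpensMeasurableSpace Z] {Ξ : Type*} [MeasurableSpace Ξ] (μ : Measure Ξ)
    [SigmaFinite μ] (hμ : μ.IsComplete) {G : Set Z} (hG : MeasureTheory.AnalyticSet G)
    {φ : Ξ → Z} (hφ : Measurable φ) : MeasurableSet (φ ⁻¹' G) := by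
  set D : ℕ → Set Ξ := spanningSets μ with hD
  have hDmeas : ∀ n, MeasurableSet (D n) := fun n => measurableSet_spanningSets μ n
  have hcover : (⋃ n, D n) = univ := iUnion_spanningSets μ
  have key : ∀ n, MeasurableSet (φ ⁻¹' G ∩ D n) := by
    intro n
    set ν : Measure Z := Measure.map φ (μ.restrict (D n)) with hν
    have : IsFiniteMeasure ν := by
      constructor
      rw [hν, Measure.map_apply hφ MeasurableSet.univ, Set.preimage_univ,
        Measure.restrict_apply_univ]
      exact measure_spanningSets_lt_top μ n
    obtain ⟨t, htsub, htmeas, htae⟩ := (analyticSet_nullMeasurable hG ν).exists_measurable_superset_ae_eq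
    -- t ⊇ G, t measurable, t =ᵐ[ν] G, so ν (t \ G) = 0
    have hdiff : ν (t \ G) = 0 := by
      have := (ae_eq_set.mp htae).1
      simpa using this
    set W := toMeasurable ν (t \ G) with hW
    have hWmeas : MeasurableSet W := measurableSet_toMeasurable ν _
    have hWnull : ν W = 0 := by rw [hW, measure_toMeasurable]; exact hdiff
    have hWpre : μ (φ ⁻¹' W ∩ D n) = 0 := by
      have h1 : ν W = μ.restrict (D n) (φ ⁻¹' W) := Measure.map_apply hφ hWmeas
      rw [Measure.restrict_apply (hφ hWmeas)] at h1
      rw [← h1]; exact hWnull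
    have hsub : (φ ⁻¹' t ∩ D n) \ (φ ⁻¹' G ∩ D n) ⊆ φ ⁻¹' W ∩ D n := by
      rintro ξ ⟨⟨ht', hd⟩, hng⟩
      refine ⟨subset_toMeasurable ν _ ⟨ht', fun hg => hng ⟨hg, hd⟩⟩, hd⟩
    have hGt : φ ⁻¹' G ∩ D n = (φ ⁻¹' t ∩ D n) \ ((φ ⁻¹' t ∩ D n) \ (φ ⁻¹' G ∩ D n)) := by
      apply Set.Subset.antisymm
      · rintro ξ ⟨hg, hd⟩
        exact ⟨⟨htsub hg, hd⟩, fun h => h.2 ⟨hg, hd⟩⟩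
      · rintro ξ ⟨⟨ht', hd⟩, hn⟩
        by_contra h
        exact hn ⟨⟨ht', hd⟩, h⟩
    rw [hGt]
    refine ((hφ htmeas).inter (hDmeas n)).diff ?_
    exact hμ.out' _ (le_antisymm (le_trans (measure_mono hsub) hWpre.le) zero_le)
  have : φ ⁻¹' G = ⋃ n, (φ ⁻¹' G ∩ D n) := by
    rw [← Set.inter_iUnion, hcover, Set.inter_univ]
  rw [this]
  exact MeasurableSet.iUnion key

end AuxMeas

lemma sInf_eq_iff' {S : Set ℕ} (hS : S.Nonempty) {n : ℕ} :
    sInf S = n ↔ n ∈ S ∧ ∀ m < n, m ∉ S := by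
  constructor
  · rintro rfl
    exact ⟨Nat.sInf_mem hS, fun m hm => Nat.notMem_of_lt_sInf hm⟩
  · rintro ⟨hn, hb⟩
    refine le_antisymm (Nat.sInf_le hn) ?_
    by_contra h
    exact hb _ (lt_of_not_ge h) (Nat.sInf_mem hS)

section Sel

variable {Ξ : Type*} [MeasurableSpace Ξ] {Z : Type*} [MetricSpace Z] [CompleteSpace Z]
  [MeasurableSpace Z] [BorelSpace Z]

noncomputable def selAux (F : Ξ → Set Z) (u : ℕ → Z) : ℕ → Ξ → ℕ
  | 0 => fun ξ => sInf {n | (F ξ ∩ ball (u n) ((1/2 : ℝ) ^ 0)).Nonempty}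
  | (k+1) => fun ξ => sInf {n | (F ξ ∩ (ball (u n) ((1/2 : ℝ) ^ (k+1)) ∩
      ball (u (selAux F u k ξ)) ((1/2 : ℝ) ^ k))).Nonempty}

variable {F : Ξ → Set Z} {u : ℕ → Z}

lemma selAux_set_nonempty_zero (hne : ∀ ξ, (F ξ).Nonempty) (hu : DenseRange u) (ξ : Ξ) :
    {n | (F ξ ∩ ball (u n) ((1/2 : ℝ) ^ 0)).Nonempty}.Nonempty := by
  obtain ⟨y, hy⟩ := hne ξ
  obtain ⟨n, hn⟩ := hu.exists_dist_lt y (by norm_num : (0:ℝ) < (1/2) ^ 0)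
  exact ⟨n, y, hy, mem_ball.mpr hn⟩

lemma selAux_inv (hne : ∀ ξ, (F ξ).Nonempty) (hu : DenseRange u) :
    ∀ (k : ℕ) (ξ : Ξ), (F ξ ∩ ball (u (selAux F u k ξ)) ((1/2 : ℝ) ^ k)).Nonempty := by
  intro k
  induction k with
  | zero =>
    intro ξ
    exact Nat.sInf_mem (selAux_set_nonempty_zero hne hu ξ)
  | succ k ih =>
    intro ξ
    obtain ⟨y, hyF, hyb⟩ := ih ξ
    obtain ⟨n, hn⟩ := hu.exists_dist_lt y (by positivity : (0:ℝ) < (1/2) ^ (k+1))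
    have hSne : {n | (F ξ ∩ (ball (u n) ((1/2 : ℝ) ^ (k+1)) ∩
        ball (u (selAux F u k ξ)) ((1/2 : ℝ) ^ k))).Nonempty}.Nonempty :=
      ⟨n, y, hyF, mem_ball.mpr hn, hyb⟩
    obtain ⟨y', hy'F, hy'b, _⟩ := Nat.sInf_mem hSne
    exact ⟨y', hy'F, hy'b⟩

lemma selAux_step (hne : ∀ ξ, (F ξ).Nonempty) (hu : DenseRange u) (k : ℕ) (ξ : Ξ) :
    dist (u (selAux F u k ξ)) (u (selAux F u (k+1) ξ)) ≤ 3/2 * (1/2 : ℝ) ^ k := by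
  obtain ⟨y, hyF, hyb⟩ := selAux_inv hne hu k ξ
  obtain ⟨n, hn⟩ := hu.exists_dist_lt y (by positivity : (0:ℝ) < (1/2) ^ (k+1))
  have hSne : {n | (F ξ ∩ (ball (u n) ((1/2 : ℝ) ^ (k+1)) ∩
      ball (u (selAux F u k ξ)) ((1/2 : ℝ) ^ k))).Nonempty}.Nonempty :=
    ⟨n, y, hyF, mem_ball.mpr hn, hyb⟩
  obtain ⟨y', _, hy'1, hy'2⟩ := Nat.sInf_mem hSne
  have h1 : dist (u (selAux F u (k+1) ξ)) y' < (1/2 : ℝ) ^ (k+1) := by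
    rw [dist_comm]; exact mem_ball.mp hy'1
  have h2 : dist y' (u (selAux F u k ξ)) < (1/2 : ℝ) ^ k := mem_ball.mp hy'2
  calc dist (u (selAux F u k ξ)) (u (selAux F u (k+1) ξ))
      ≤ dist (u (selAux F u k ξ)) y' + dist y' (u (selAux F u (k+1) ξ)) := dist_triangle _ _ _
    _ ≤ (1/2 : ℝ) ^ k + (1/2 : ℝ) ^ (k+1) := by
        rw [dist_comm (u (selAux F u k ξ)) y', dist_comm y' (u (selAux F u (k+1) ξ))]
        exact add_le_add h2.le h1.le
    _ = 3/2 * (1/2 : ℝ) ^ k := by ring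

lemma selAux_meas (hne : ∀ ξ, (F ξ).Nonempty) (hu : DenseRange u)
    (hmeas : ∀ B : Set Z, MeasurableSet B → MeasurableSet {ξ | (F ξ ∩ B).Nonempty})
    (k : ℕ) : Measurable (selAux F u k) := by
  induction k with
  | zero =>
    apply measurable_to_countable'
    intro n
    have h : selAux F u 0 ⁻¹' {n} =
        {ξ | (F ξ ∩ ball (u n) ((1/2 : ℝ) ^ 0)).Nonempty} ∩
          ⋂ m, ⋂ _ : m < n, {ξ | (F ξ ∩ ball (u m) ((1/2 : ℝ) ^ 0)).Nonempty}ᶜ := by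
      ext ξ
      simp only [Set.mem_preimage, Set.mem_singleton_iff, Set.mem_inter_iff, Set.mem_iInter,
        Set.mem_compl_iff, Set.mem_setOf_eq]
      show selAux F u 0 ξ = n ↔ _
      rw [show selAux F u 0 ξ = sInf {n | (F ξ ∩ ball (u n) ((1/2 : ℝ) ^ 0)).Nonempty} from rfl,
        sInf_eq_iff' (selAux_set_nonempty_zero hne hu ξ)]
      rfl
    rw [h]
    exact (hmeas _ measurableSet_ball).inter
      (MeasurableSet.iInter fun m => MeasurableSet.iInter fun _ =>
        (hmeas _ measurableSet_ball).compl)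
  | succ k ih =>
    apply measurable_to_countable'
    intro n
    have h : selAux F u (k+1) ⁻¹' {n} = ⋃ m, (selAux F u k ⁻¹' {m} ∩
        ({ξ | (F ξ ∩ (ball (u n) ((1/2 : ℝ) ^ (k+1)) ∩ ball (u m) ((1/2 : ℝ) ^ k))).Nonempty} ∩
          ⋂ j, ⋂ _ : j < n,
            {ξ | (F ξ ∩ (ball (u j) ((1/2 : ℝ) ^ (k+1)) ∩ ball (u m) ((1/2 : ℝ) ^ k))).Nonempty}ᶜ)) := by
      ext ξ
      simp only [Set.mem_preimage, Set.mem_singleton_iff, Set.mem_iUnion, Set.mem_inter_iff,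
        Set.mem_iInter, Set.mem_compl_iff, Set.mem_setOf_eq]
      have hSne : {j | (F ξ ∩ (ball (u j) ((1/2 : ℝ) ^ (k+1)) ∩
          ball (u (selAux F u k ξ)) ((1/2 : ℝ) ^ k))).Nonempty}.Nonempty := by
        obtain ⟨y, hyF, hyb⟩ := selAux_inv hne hu k ξ
        obtain ⟨j, hj⟩ := hu.exists_dist_lt y (by positivity : (0:ℝ) < (1/2) ^ (k+1))
        exact ⟨j, y, hyF, mem_ball.mpr hj, hyb⟩
      constructor
      · intro hsel
        refine ⟨selAux F u k ξ, rfl, ?_⟩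
        have := (sInf_eq_iff' hSne).mp hsel
        exact this
      · rintro ⟨m, rfl, hrest⟩
        exact (sInf_eq_iff' hSne).mpr hrest
    rw [h]
    refine MeasurableSet.iUnion fun m => (ih (measurableSet_singleton m)).inter
      ((hmeas _ (measurableSet_ball.inter measurableSet_ball)).inter
        (MeasurableSet.iInter fun j => MeasurableSet.iInter fun _ =>
          (hmeas _ (measurableSet_ball.inter measurableSet_ball)).compl))

/-- Kuratowski–Ryll-Nardzewski-style measurable selection. -/
lemma exists_measurable_selection [TopologicalSpace.SeparableSpace Z] [Nonempty Z]
    (F : Ξ → Set Z) (hcl : ∀ ξ, IsClosed (F ξ)) (hne : ∀ ξ, (F ξ).Nonempty)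
    (hmeas : ∀ B : Set Z, MeasurableSet B → MeasurableSet {ξ | (F ξ ∩ B).Nonempty}) :
    ∃ ψ : Ξ → Z, Measurable ψ ∧ ∀ ξ, ψ ξ ∈ F ξ := by
  obtain ⟨u, hu⟩ := TopologicalSpace.exists_dense_seq Z
  have hcauchy : ∀ ξ, CauchySeq (fun k => u (selAux F u k ξ)) := by
    intro ξ
    exact cauchySeq_of_le_geometric (1/2) (3/2) (by norm_num)
      (fun k => selAux_step hne hu k ξ)
  set ψ : Ξ → Z := fun ξ => limUnder atTop (fun k => u (selAux F u k ξ)) with hψ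
  have htend : ∀ ξ, Tendsto (fun k => u (selAux F u k ξ)) atTop (𝓝 (ψ ξ)) :=
    fun ξ => (hcauchy ξ).tendsto_limUnder
  refine ⟨ψ, ?_, ?_⟩
  · refine measurable_of_tendsto_metrizable'
      (f := fun k ξ => u (selAux F u k ξ)) atTop
      (fun k => (measurable_of_countable u).comp (selAux_meas hne hu hmeas k)) ?_
    rw [tendsto_pi_nhds]
    exact htend
  · intro ξ
    have hy : ∀ k, ∃ y ∈ F ξ, dist y (u (selAux F u k ξ)) < (1/2 : ℝ) ^ k := by
      intro k
      obtain ⟨y, hyF, hyb⟩ := selAux_inv hne hu k ξ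
      exact ⟨y, hyF, mem_ball.mp hyb⟩
    choose y hyF hyd using hy
    have hty : Tendsto y atTop (𝓝 (ψ ξ)) := by
      rw [tendsto_iff_dist_tendsto_zero]
      refine squeeze_zero (fun k => dist_nonneg)
        (g := fun k => (1/2 : ℝ) ^ k + dist (u (selAux F u k ξ)) (ψ ξ)) (fun k => ?_) ?_
      · calc dist (y k) (ψ ξ) ≤ dist (y k) (u (selAux F u k ξ)) + dist (u (selAux F u k ξ)) (ψ ξ) :=
            dist_triangle _ _ _
          _ ≤ (1/2 : ℝ) ^ k + dist (u (selAux F u k ξ)) (ψ ξ) :=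
            add_le_add (hyd k).le (le_refl _)
      · have h1 : Tendsto (fun k : ℕ => ((1:ℝ)/2) ^ k) atTop (𝓝 0) :=
          tendsto_pow_atTop_nhds_zero_of_lt_one (by norm_num) (by norm_num)
        have h2 : Tendsto (fun k => dist (u (selAux F u k ξ)) (ψ ξ)) atTop (𝓝 0) :=
          tendsto_iff_dist_tendsto_zero.mp (htend ξ)
        simpa using h1.add h2
    exact (hcl ξ).mem_of_tendsto hty (Eventually.of_forall hyF)

end Sel

/-- Measurability of the metric projection onto a nonempty closed subset `K` of a
separable Banach space, and existence of a measurable a.e. selection realizing the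
distance, over a complete σ-finite measure space. -/
theorem metricProjection_measurable_and_selection
    {Ξ : Type*} [MeasurableSpace Ξ] (μ : Measure Ξ) [SigmaFinite μ]
    (hμ : μ.IsComplete)
    {Z : Type*} [NormedAddCommGroup Z] [NormedSpace ℝ Z] [CompleteSpace Z]
    [TopologicalSpace.SeparableSpace Z] [MeasurableSpace Z] [BorelSpace Z]
    (K : Set Z) (hKcl : IsClosed K) (hKne : K.Nonempty)
    (φ : Ξ → Z) (hφ : Measurable φ) :
    (∀ B : Set Z, MeasurableSet B →
        MeasurableSet {ξ | ({y ∈ K | ‖y - φ ξ‖ = infDist (φ ξ) K} ∩ B).Nonempty}) ∧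
    ((∀ ξ, ({y ∈ K | ‖y - φ ξ‖ = infDist (φ ξ) K}).Nonempty) →
      ∃ ψ : Ξ → Z, Measurable ψ ∧
        ∀ᵐ ξ ∂μ, ψ ξ ∈ K ∧ ‖ψ ξ - φ ξ‖ = infDist (φ ξ) K) := by
  have h1 : ∀ B : Set Z, MeasurableSet B →
      MeasurableSet {ξ | ({y ∈ K | ‖y - φ ξ‖ = infDist (φ ξ) K} ∩ B).Nonempty} := by
    intro B hB
    set E : Set (Z × Z) := {p | p.2 ∈ K ∧ p.2 ∈ B ∧ ‖p.2 - p.1‖ = infDist p.1 K} with hE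
    have hEmeas : MeasurableSet E := by
      have hE2 : E = (Prod.snd ⁻¹' K) ∩ (Prod.snd ⁻¹' B) ∩ {p | ‖p.2 - p.1‖ = infDist p.1 K} := by
        ext p; simp [hE, and_assoc]
      rw [hE2]
      have h3 : IsClosed {p : Z × Z | ‖p.2 - p.1‖ = infDist p.1 K} :=
        isClosed_eq (continuous_norm.comp (continuous_snd.sub continuous_fst))
          ((continuous_infDist_pt K).comp continuous_fst)
      exact ((hKcl.measurableSet.preimage measurable_snd).inter
        (hB.preimage measurable_snd)).inter h3.measurableSet
    have hG : MeasureTheory.AnalyticSet (Prod.fst '' E) :=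
      hEmeas.analyticSet_image measurable_fst
    have hset : {ξ | ({y ∈ K | ‖y - φ ξ‖ = infDist (φ ξ) K} ∩ B).Nonempty}
        = φ ⁻¹' (Prod.fst '' E) := by
      ext ξ
      simp only [Set.mem_setOf_eq, Set.mem_preimage, Set.mem_image, Set.Nonempty]
      constructor
      · rintro ⟨y, ⟨⟨hyK, hyd⟩, hyB⟩⟩
        exact ⟨(φ ξ, y), ⟨hyK, hyB, hyd⟩, rfl⟩
      · rintro ⟨⟨z, y⟩, ⟨hyK, hyB, hyd⟩, rfl⟩
        exact ⟨y, ⟨hyK, hyd⟩, hyB⟩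
    rw [hset]
    exact measurableSet_preimage_analytic μ hμ hG hφ
  refine ⟨h1, fun hne => ?_⟩
  have hZne : Nonempty Z := ⟨hKne.choose⟩
  have hclF : ∀ ξ, IsClosed {y ∈ K | ‖y - φ ξ‖ = infDist (φ ξ) K} := fun ξ => by
    have h : {y ∈ K | ‖y - φ ξ‖ = infDist (φ ξ) K}
        = K ∩ {y | ‖y - φ ξ‖ = infDist (φ ξ) K} := rfl
    rw [h]
    exact hKcl.inter
      (isClosed_eq (continuous_norm.comp (continuous_sub_right (φ ξ))) continuous_const)
  obtain ⟨ψ, hψm, hψ⟩ := exists_measurable_selection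
    (fun ξ => {y ∈ K | ‖y - φ ξ‖ = infDist (φ ξ) K}) hclF hne h1
  exact ⟨ψ, hψm, ae_of_all _ fun ξ => hψ ξ⟩
end

section
/- Let (Ξ, Σ, μ) be a complete finite measure space, p ≥ 1, Z̃ a separable Banach space, K ⊆ Z̃ closed nonempty, and φ ∈ L^p(Ξ, μ; Z̃) with φ(ξ) ∈ K μ-a.e. Then the set-valued maps ξ ⇝ T_K(φ(ξ)) (adjacent cone) and ξ ⇝ C_K(φ(ξ)) (Clarke tangent cone) are Σ-measurable. -/
open MeasureTheory Metric
open scoped ENNReal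

/-- The Clarke tangent cone to `K` at `z`. -/
def clarkeTangentCone {Z : Type*} [NormedAddCommGroup Z] [NormedSpace ℝ Z]
    (K : Set Z) (z : Z) : Set Z :=
  {v | ∀ ε > (0 : ℝ), ∃ δ > (0 : ℝ), ∀ t : ℝ, 0 < t → t < δ →
    ∀ y ∈ K, ‖y - z‖ < δ → infDist (y + t • v) K < ε * t}

/-- The adjacent tangent cone to `K` at `z`. -/
def adjacentCone {Z : Type*} [NormedAddCommGroup Z] [NormedSpace ℝ Z]
    (K : Set Z) (z : Z) : Set Z :=
  {v | ∀ ε > (0 : ℝ), ∃ δ > (0 : ℝ), ∀ t : ℝ, 0 < t → t < δ →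
    infDist (z + t • v) K < ε * t}


section Aux
open Set
-- capacitability core
lemma exists_compact_of_lt_range {X : Type*} [MetricSpace X] [MeasurableSpace X] [BorelSpace X]
    (ν : Measure X) [IsFiniteMeasure ν] (σ : (ℕ → ℕ) → X) (hσ : Continuous σ)
    (c : ℝ≥0∞) (hc : c < ν (Set.range σ)) :
    ∃ K : Set X, IsCompact K ∧ K ⊆ Set.range σ ∧ c ≤ ν K := by
  have H : ∀ (S : Set (ℕ → ℕ)) (k : ℕ), ∃ n : ℕ,
      c < ν (σ '' S) → c < ν (σ '' (S ∩ {x | x k ≤ n})) := by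
    intro S k
    by_cases h : c < ν (σ '' S)
    · have hS : S = ⋃ n : ℕ, (S ∩ {x | x k ≤ n}) := by
        ext x
        constructor
        · intro hx
          exact mem_iUnion.mpr ⟨x k, hx, le_refl (x k)⟩
        · intro hx
          obtain ⟨n, hx, -⟩ := mem_iUnion.mp hx
          exact hx
      have hU : σ '' S = ⋃ n : ℕ, σ '' (S ∩ {x | x k ≤ n}) := by
        conv_lhs => rw [hS]
        exact image_iUnion
      have hdir : Directed (· ⊆ ·) (fun n : ℕ => σ '' (S ∩ {x | x k ≤ n})) := by
        apply Monotone.directed_le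
        intro n m hnm
        exact image_mono (inter_subset_inter_right _ fun x hx => le_trans hx hnm)
      rw [hU, hdir.measure_iUnion] at h
      obtain ⟨n, hn⟩ := lt_iSup_iff.mp h
      exact ⟨n, fun _ => hn⟩
    · exact ⟨0, fun h' => absurd h' h⟩
  choose nxt hnxt using H
  -- recursively defined decreasing sets
  let T : ℕ → Set (ℕ → ℕ) := fun k => Nat.rec Set.univ (fun k Tk => Tk ∩ {x | x k ≤ nxt Tk k}) k
  have hT0 : T 0 = Set.univ := rfl
  have hTsucc : ∀ k, T (k + 1) = T k ∩ {x | x k ≤ nxt (T k) k} := fun k => rfl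
  set b : ℕ → ℕ := fun k => nxt (T k) k with hb
  have hmeas : ∀ k, c < ν (σ '' T k) := by
    intro k
    induction k with
    | zero => rw [hT0, image_univ]; exact hc
    | succ k ih => rw [hTsucc k]; exact hnxt (T k) k ih
  have hshape : ∀ k, T k = {x : ℕ → ℕ | ∀ i < k, x i ≤ b i} := by
    intro k
    induction k with
    | zero => ext x; simp [hT0]
    | succ k ih =>
      ext x
      have h1 : x ∈ T (k + 1) ↔ x ∈ T k ∧ x k ≤ b k := Iff.rfl
      have h2 : x ∈ T k ↔ ∀ i < k, x i ≤ b i := by rw [ih]; rfl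
      simp only [h1, h2, mem_setOf_eq, Nat.lt_succ_iff_lt_or_eq]
      constructor
      · rintro ⟨hA, hB⟩ i (hi | rfl)
        · exact hA i hi
        · exact hB
      · intro h
        exact ⟨fun i hi => h i (Or.inl hi), h k (Or.inr rfl)⟩
  have hTanti : Antitone T := by
    apply antitone_nat_of_succ_le
    intro k
    rw [hTsucc k]
    exact inter_subset_left
  have hTclosed : ∀ k, IsClosed (T k) := by
    intro k
    rw [hshape k]
    have : {x : ℕ → ℕ | ∀ i < k, x i ≤ b i} = ⋂ (i : ℕ) (_ : i < k), (fun x : ℕ → ℕ => x i) ⁻¹' Set.Iic (b i) := by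
      ext x; simp
    rw [this]
    exact isClosed_iInter fun i => isClosed_iInter fun _ =>
      (isClosed_discrete _).preimage (continuous_apply i)
  -- the compact kernel
  set C : Set (ℕ → ℕ) := Set.pi Set.univ (fun i => Set.Iic (b i)) with hC
  have hCcomp : IsCompact C := isCompact_univ_pi fun i => (Set.finite_Iic (b i)).isCompact
  have hCinter : C = ⋂ k, T k := by
    ext x
    simp only [hC, Set.mem_pi, Set.mem_univ, forall_true_left, mem_iInter, Set.mem_Iic]
    constructor
    · intro h k
      rw [hshape k]
      exact fun i _ => h i
    · intro h i
      have := h (i + 1)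
      rw [hshape (i + 1)] at this
      exact this i (Nat.lt_succ_self i)
  refine ⟨σ '' C, hCcomp.image hσ, image_subset_range σ C, ?_⟩
  -- every open set containing σ '' C contains some σ '' T k
  have hopen : ∀ U : Set X, IsOpen U → σ '' C ⊆ U → ∃ k, σ '' T k ⊆ U := by
    intro U hU hKU
    by_contra hcon
    push_neg at hcon
    have : ∀ k, ∃ x, x ∈ T k ∧ σ x ∉ U := by
      intro k
      obtain ⟨p, hp, hpn⟩ := Set.not_subset.mp (hcon k)
      obtain ⟨x, hx, rfl⟩ := hp
      exact ⟨x, hx, hpn⟩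
    choose x hxT hxU using this
    -- all x k lie in a common compact set
    set Bd : ℕ → ℕ := fun i => max (b i) ((Finset.range (i + 1)).sup fun k => x k i) with hBd
    have hbd : ∀ k i, x k i ≤ Bd i := by
      intro k i
      rcases lt_or_ge i k with hik | hik
      · have := hxT k
        rw [hshape k] at this
        exact le_trans (this i hik) (le_max_left _ _)
      · refine le_trans ?_ (le_max_right _ _)
        exact Finset.le_sup (f := fun k => x k i) (Finset.mem_range.mpr (Nat.lt_succ_of_le hik))
    have hC2 : IsCompact (Set.pi Set.univ fun i => Set.Iic (Bd i)) :=
      isCompact_univ_pi fun i => (Set.finite_Iic (Bd i)).isCompact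
    have hxmem : ∀ k, x k ∈ Set.pi Set.univ fun i => Set.Iic (Bd i) := by
      intro k
      intro i _
      exact hbd k i
    obtain ⟨a, -, ψ, hψ, hlim⟩ := hC2.tendsto_subseq hxmem
    have haT : ∀ k, a ∈ T k := by
      intro k
      apply (hTclosed k).mem_of_tendsto hlim
      filter_upwards [Filter.eventually_ge_atTop k] with j hj
      exact hTanti (le_trans hj (hψ.le_apply)) (hxT (ψ j))
    have haC : σ a ∈ U := hKU ⟨a, by rw [hCinter]; exact mem_iInter.mpr haT, rfl⟩
    have : Filter.Tendsto (fun j => σ (x (ψ j))) Filter.atTop (nhds (σ a)) :=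
      (hσ.tendsto a).comp hlim
    have := this.eventually (hU.mem_nhds haC)
    obtain ⟨j, hj⟩ := this.exists
    exact hxU (ψ j) hj
  -- conclude via thickenings
  have hKcl : IsClosed (σ '' C) := (hCcomp.image hσ).isClosed
  have htend := tendsto_measure_thickening_of_isClosed
    (μ := ν) ⟨1, one_pos, measure_ne_top ν _⟩ hKcl
  refine ge_of_tendsto htend ?_
  filter_upwards [self_mem_nhdsWithin] with δ hδ
  obtain ⟨k, hk⟩ := hopen (thickening δ (σ '' C)) isOpen_thickening
    (self_subset_thickening hδ _)
  exact le_trans (hmeas k).le (measure_mono hk)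


/-- Choquet capacitability: an analytic set is null-measurable for any finite Borel measure. -/
lemma AnalyticSet.nullMeasurableSet' {X : Type*} [MetricSpace X] [MeasurableSpace X] [BorelSpace X]
    (ν : Measure X) [IsFiniteMeasure ν] {A : Set X} (hA : MeasureTheory.AnalyticSet A) :
    NullMeasurableSet A ν := by
  rw [MeasureTheory.AnalyticSet] at hA
  rcases hA with rfl | ⟨σ, hσ, rfl⟩
  · exact NullMeasurableSet.of_null (by simp)
  set A := Set.range σ with hA
  have hq : ∀ q : ℚ, ∃ K : Set X, IsCompact K ∧ K ⊆ A ∧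
      ((Real.toNNReal q : ℝ≥0∞) < ν A → (Real.toNNReal q : ℝ≥0∞) ≤ ν K) := by
    intro q
    by_cases h : (Real.toNNReal q : ℝ≥0∞) < ν A
    · obtain ⟨K, h1, h2, h3⟩ := exists_compact_of_lt_range ν σ hσ _ h
      exact ⟨K, h1, h2, fun _ => h3⟩
    · exact ⟨∅, isCompact_empty, Set.empty_subset _, fun h' => absurd h' h⟩
  choose Kf hK1 hK2 hK3 using hq
  set F : Set X := ⋃ q : ℚ, Kf q with hF
  have hFmeas : MeasurableSet F :=
    MeasurableSet.iUnion fun q => (hK1 q).isClosed.measurableSet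
  have hFA : F ⊆ A := Set.iUnion_subset hK2
  have hAF : ν A ≤ ν F := by
    refine le_of_forall_lt fun c hc => ?_
    obtain ⟨q, -, hq1, hq2⟩ := ENNReal.lt_iff_exists_rat_btwn.mp hc
    exact lt_of_lt_of_le hq1 (le_trans (hK3 q hq2) (measure_mono (Set.subset_iUnion _ q)))
  have hFA' : ν F ≤ ν A := measure_mono hFA
  set H := toMeasurable ν A with hH
  have hAH : A ⊆ H := subset_toMeasurable ν A
  have hHA : ν H = ν A := measure_toMeasurable A
  have hdiff : ν (H \ F) = 0 := by
    rw [measure_diff (hFA.trans hAH) hFmeas.nullMeasurableSet (measure_ne_top ν F), hHA]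
    exact tsub_eq_zero_of_le hAF
  have : A = F ∪ (A \ F) := (Set.union_diff_cancel hFA).symm
  rw [this]
  exact hFmeas.nullMeasurableSet.union
    (NullMeasurableSet.of_null (measure_mono_null (Set.diff_subset_diff_left hAH) hdiff))


lemma measurableSet_exists_of_graph
    {Ξ : Type*} [MeasurableSpace Ξ] (μ : Measure Ξ) [IsFiniteMeasure μ]
    (hμ : μ.IsComplete)
    {Z : Type*} [NormedAddCommGroup Z] [NormedSpace ℝ Z] [CompleteSpace Z]
    [TopologicalSpace.SeparableSpace Z] [MeasurableSpace Z] [BorelSpace Z]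
    (φ : Ξ → Z) (hφm : Measurable φ)
    (G : Set (Z × Z)) (hG : MeasurableSet G) :
    MeasurableSet {ξ | ∃ v, (φ ξ, v) ∈ G} := by
  haveI := hμ
  haveI : SecondCountableTopology Z := UniformSpace.secondCountable_of_separable Z
  -- the projection of G is analytic
  have hAn : MeasureTheory.AnalyticSet (Prod.fst '' G) :=
    (hG.analyticSet).image_of_continuous continuous_fst
  set ν : Measure Z := μ.map φ with hν
  haveI : IsFiniteMeasure ν := by
    constructor
    rw [hν, Measure.map_apply hφm MeasurableSet.univ]
    exact measure_lt_top μ _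
  obtain ⟨T, hTmeas, hST⟩ := AnalyticSet.nullMeasurableSet' ν hAn
  -- the bad set is ν-null
  have hbad : ν {z | ¬(z ∈ Prod.fst '' G ↔ z ∈ T)} = 0 := by
    have := hST
    rw [Filter.eventuallyEq_set] at this
    exact MeasureTheory.ae_iff.mp this
  obtain ⟨N, hWN, hNmeas, hN0⟩ := exists_measurable_superset_of_null hbad
  have hμN : μ (φ ⁻¹' N) = 0 := by
    rw [← Measure.map_apply hφm hNmeas]
    exact hN0
  have key : {ξ | ∃ v, (φ ξ, v) ∈ G} = φ ⁻¹' (Prod.fst '' G) := by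
    ext ξ
    simp only [Set.mem_setOf_eq, Set.mem_preimage, Set.mem_image, Prod.exists]
    constructor
    · rintro ⟨v, hv⟩
      exact ⟨φ ξ, v, hv, rfl⟩
    · rintro ⟨z, v, hv, rfl⟩
      exact ⟨v, hv⟩
  rw [key]
  have haeeq : φ ⁻¹' T =ᵐ[μ] φ ⁻¹' (Prod.fst '' G) := by
    rw [Filter.eventuallyEq_set, MeasureTheory.ae_iff]
    apply measure_mono_null _ hμN
    intro ξ hξ
    exact hWN (by simpa [Iff.comm] using hξ)
  exact ((hTmeas.preimage hφm).nullMeasurableSet.congr haeeq).measurable_of_complete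


section Cones
variable {Z : Type*} [NormedAddCommGroup Z] [NormedSpace ℝ Z]

/-- rational points approximating `t` in `(0, δ)` -/
lemma rat_approx {t δ η : ℝ} (ht : 0 < t) (htδ : t < δ) (hη : 0 < η) :
    ∃ q : ℚ, 0 < q ∧ (q : ℝ) < δ ∧ |t - (q : ℝ)| < η := by
  have hlo : max (t - η) (t / 2) < t := max_lt (by linarith) (by linarith)
  obtain ⟨q, hq1, hq2⟩ := exists_rat_btwn hlo
  have hq0 : (0 : ℝ) < (q : ℝ) := lt_of_le_of_lt (by positivity : (0:ℝ) ≤ t / 2)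
    (lt_of_le_of_lt (le_max_right _ _) hq1)
  refine ⟨q, by exact_mod_cast hq0, by linarith, ?_⟩
  rw [abs_lt]
  constructor
  · linarith
  · have := lt_of_le_of_lt (le_max_left (t - η) (t / 2)) hq1
    linarith

lemma adj_mem_iff (K : Set Z) (z v : Z) :
    v ∈ adjacentCone K z ↔ ∀ ε : ℚ, 0 < ε → ∃ δ : ℚ, 0 < δ ∧ ∀ t : ℚ, 0 < t →
      (t : ℝ) < (δ : ℝ) → infDist (z + (t : ℝ) • v) K ≤ (ε : ℝ) * t := by
  constructor
  · intro h ε hε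
    obtain ⟨δ, hδ, hP⟩ := h (ε : ℝ) (by exact_mod_cast hε)
    obtain ⟨q, hq1, hq2⟩ := exists_rat_btwn hδ
    refine ⟨q, by exact_mod_cast hq1, fun t ht htq => ?_⟩
    exact (hP (t : ℝ) (by exact_mod_cast ht) (htq.trans hq2)).le
  · intro h ε hε
    obtain ⟨ε', hε'1, hε'2⟩ := exists_rat_btwn hε
    have hε'0 : 0 < ε' := by exact_mod_cast hε'1
    obtain ⟨δ, hδ0, hP⟩ := h ε' hε'0
    refine ⟨(δ : ℝ), by exact_mod_cast hδ0, fun t ht htδ => ?_⟩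
    have hle : infDist (z + t • v) K ≤ (ε' : ℝ) * t := by
      set S : Set ℝ := {s | infDist (z + s • v) K ≤ (ε' : ℝ) * s} with hS
      have hcl : IsClosed S := isClosed_le
        ((continuous_infDist_pt K).comp (continuous_const.add (continuous_id.smul continuous_const)))
        (continuous_const.mul continuous_id)
      have htS : t ∈ closure S := by
        rw [Metric.mem_closure_iff]
        intro η hη
        obtain ⟨q, hq0, hqδ, hqt⟩ := rat_approx ht htδ hη
        exact ⟨(q : ℝ), hP q hq0 hqδ, by rwa [Real.dist_eq]⟩
      exact hcl.closure_subset htS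
    calc infDist (z + t • v) K ≤ (ε' : ℝ) * t := hle
      _ < ε * t := by exact mul_lt_mul_of_pos_right hε'2 ht

lemma measurable_adjGraph [MeasurableSpace Z] [BorelSpace Z] [SecondCountableTopology Z] (K : Set Z) :
    MeasurableSet {p : Z × Z | p.2 ∈ adjacentCone K p.1} := by
  have heq : {p : Z × Z | p.2 ∈ adjacentCone K p.1} =
      ⋂ (ε : ℚ) (_ : 0 < ε), ⋃ (δ : ℚ) (_ : 0 < δ), ⋂ (t : ℚ) (_ : 0 < t) (_ : (t : ℝ) < (δ : ℝ)),
        {p : Z × Z | infDist (p.1 + (t : ℝ) • p.2) K ≤ (ε : ℝ) * t} := by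
    ext p
    simp only [Set.mem_setOf_eq, adj_mem_iff, Set.mem_iInter, Set.mem_iUnion, Set.mem_setOf_eq,
      exists_prop]
  rw [heq]
  refine MeasurableSet.iInter fun ε => MeasurableSet.iInter fun _ =>
    MeasurableSet.iUnion fun δ => MeasurableSet.iUnion fun _ =>
    MeasurableSet.iInter fun t => MeasurableSet.iInter fun _ => MeasurableSet.iInter fun _ => ?_
  refine (isClosed_le ?_ continuous_const).measurableSet
  exact (continuous_infDist_pt K).comp (continuous_fst.add (continuous_snd.const_smul (t : ℝ)))

set_option maxHeartbeats 1000000 in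
lemma clarke_mem_iff (K : Set Z) {D : Set Z} (hDK : D ⊆ K) (hKD : K ⊆ closure D) (z v : Z) :
    v ∈ clarkeTangentCone K z ↔ ∀ ε : ℚ, 0 < ε → ∃ δ : ℚ, 0 < δ ∧ ∀ t : ℚ, 0 < t →
      (t : ℝ) < (δ : ℝ) → ∀ y ∈ D, ‖y - z‖ < (δ : ℝ) →
        infDist (y + (t : ℝ) • v) K ≤ (ε : ℝ) * t := by
  constructor
  · intro h ε hε
    obtain ⟨δ, hδ, hP⟩ := h (ε : ℝ) (by exact_mod_cast hε)
    obtain ⟨q, hq1, hq2⟩ := exists_rat_btwn hδ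
    refine ⟨q, by exact_mod_cast hq1, fun t ht htq y hy hyz => ?_⟩
    exact (hP (t : ℝ) (by exact_mod_cast ht) (htq.trans hq2) y (hDK hy) (hyz.trans hq2)).le
  · intro h ε hε
    obtain ⟨ε', hε'1, hε'2⟩ := exists_rat_btwn hε
    have hε'0 : 0 < ε' := by exact_mod_cast hε'1
    obtain ⟨δ, hδ0, hP⟩ := h ε' hε'0
    refine ⟨(δ : ℝ), by exact_mod_cast hδ0, fun t ht htδ y hy hyz => ?_⟩
    have hle : infDist (y + t • v) K ≤ (ε' : ℝ) * t := by
      have hcl : IsClosed {q : ℝ × Z | infDist (q.2 + q.1 • v) K ≤ (ε' : ℝ) * q.1} := isClosed_le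
        ((continuous_infDist_pt K).comp (continuous_snd.add (continuous_fst.smul continuous_const)))
        (continuous_const.mul continuous_fst)
      have htS : (t, y) ∈ closure {q : ℝ × Z | infDist (q.2 + q.1 • v) K ≤ (ε' : ℝ) * q.1} := by
        rw [Metric.mem_closure_iff]
        intro η hη
        obtain ⟨q, hq0, hqδ, hqt⟩ := rat_approx ht htδ hη
        have hpos : 0 < min η ((δ : ℝ) - ‖y - z‖) := lt_min hη (by linarith)
        obtain ⟨u, hu, hyu⟩ := Metric.mem_closure_iff.mp (hKD hy) _ hpos
        have huz : ‖u - z‖ < (δ : ℝ) := by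
          have h1 : ‖u - z‖ ≤ ‖u - y‖ + ‖y - z‖ := norm_sub_le_norm_sub_add_norm_sub u y z
          have h2 : ‖u - y‖ < (δ : ℝ) - ‖y - z‖ := by
            rw [← dist_eq_norm, dist_comm]
            exact lt_of_lt_of_le hyu (min_le_right _ _)
          linarith
        have hmem : ((q : ℝ), u) ∈ {q : ℝ × Z | infDist (q.2 + q.1 • v) K ≤ (ε' : ℝ) * q.1} :=
          hP q hq0 hqδ u hu huz
        refine ⟨(↑q, u), hmem, ?_⟩
        rw [Prod.dist_eq]
        refine max_lt ?_ (lt_of_lt_of_le hyu (min_le_left _ _))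
        rw [Real.dist_eq]
        exact hqt
      simpa using hcl.closure_subset htS
    calc infDist (y + t • v) K ≤ (ε' : ℝ) * t := hle
      _ < ε * t := mul_lt_mul_of_pos_right hε'2 ht

lemma measurable_clarkeGraph [MeasurableSpace Z] [BorelSpace Z] [SecondCountableTopology Z]
    (K : Set Z) {D : Set Z} (hDc : D.Countable) (hDK : D ⊆ K) (hKD : K ⊆ closure D) :
    MeasurableSet {p : Z × Z | p.2 ∈ clarkeTangentCone K p.1} := by
  have heq : {p : Z × Z | p.2 ∈ clarkeTangentCone K p.1} =
      ⋂ (ε : ℚ) (_ : 0 < ε), ⋃ (δ : ℚ) (_ : 0 < δ), ⋂ (t : ℚ) (_ : 0 < t) (_ : (t : ℝ) < (δ : ℝ)),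
        ⋂ y ∈ D, {p : Z × Z | ‖y - p.1‖ < (δ : ℝ) →
          infDist (y + (t : ℝ) • p.2) K ≤ (ε : ℝ) * t} := by
    ext p
    simp only [Set.mem_setOf_eq, clarke_mem_iff K hDK hKD, Set.mem_iInter, Set.mem_iUnion,
      Set.mem_setOf_eq, exists_prop]
  rw [heq]
  refine MeasurableSet.iInter fun ε => MeasurableSet.iInter fun _ =>
    MeasurableSet.iUnion fun δ => MeasurableSet.iUnion fun _ =>
    MeasurableSet.iInter fun t => MeasurableSet.iInter fun _ => MeasurableSet.iInter fun _ =>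
    MeasurableSet.biInter hDc fun y _ => ?_
  have : {p : Z × Z | ‖y - p.1‖ < (δ : ℝ) → infDist (y + (t : ℝ) • p.2) K ≤ (ε : ℝ) * t} =
      {p : Z × Z | ‖y - p.1‖ < (δ : ℝ)}ᶜ ∪ {p : Z × Z | infDist (y + (t : ℝ) • p.2) K ≤ (ε : ℝ) * t} := by
    ext p
    simp [imp_iff_not_or]
  rw [this]
  refine MeasurableSet.union ?_ ?_
  · refine (MeasurableSet.compl ?_)
    exact ((isOpen_lt ((continuous_const.sub continuous_fst).norm) continuous_const).measurableSet)
  · refine (isClosed_le ?_ continuous_const).measurableSet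
    exact (continuous_infDist_pt K).comp (continuous_const.add (continuous_snd.const_smul (t : ℝ)))

end Cones

end Aux

/-- For `φ ∈ L^p` with values a.e. in a closed nonempty set `K` of a separable Banach
space, the set-valued maps `ξ ⇝ T_K(φ(ξ))` and `ξ ⇝ C_K(φ(ξ))` are measurable. -/
theorem tangentCone_setValued_measurable
    {Ξ : Type*} [MeasurableSpace Ξ] (μ : Measure Ξ) [IsFiniteMeasure μ]
    (hμ : μ.IsComplete)
    {Z : Type*} [NormedAddCommGroup Z] [NormedSpace ℝ Z] [CompleteSpace Z]
    [TopologicalSpace.SeparableSpace Z] [MeasurableSpace Z] [BorelSpace Z]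
    (p : ℝ≥0∞) (hp : 1 ≤ p)
    (K : Set Z) (hKcl : IsClosed K) (hKne : K.Nonempty)
    (φ : Ξ → Z) (hφm : Measurable φ) (hφp : MemLp φ p μ)
    (hφK : ∀ᵐ ξ ∂μ, φ ξ ∈ K) :
    (∀ B : Set Z, MeasurableSet B →
        MeasurableSet {ξ | (adjacentCone K (φ ξ) ∩ B).Nonempty}) ∧
    (∀ B : Set Z, MeasurableSet B →
        MeasurableSet {ξ | (clarkeTangentCone K (φ ξ) ∩ B).Nonempty}) := by
  haveI : SecondCountableTopology Z := UniformSpace.secondCountable_of_separable Z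
  obtain ⟨D, hDK, hDc, hKD⟩ :=
    (TopologicalSpace.IsSeparable.of_separableSpace K).exists_countable_dense_subset
  constructor
  · intro B hB
    have hG : MeasurableSet ({p : Z × Z | p.2 ∈ adjacentCone K p.1} ∩ (Set.univ ×ˢ B)) :=
      (measurable_adjGraph K).inter (MeasurableSet.univ.prod hB)
    have hmeas := measurableSet_exists_of_graph μ hμ φ hφm _ hG
    have heq : {ξ | (adjacentCone K (φ ξ) ∩ B).Nonempty} =
        {ξ | ∃ v, (φ ξ, v) ∈ ({p : Z × Z | p.2 ∈ adjacentCone K p.1} ∩ (Set.univ ×ˢ B))} := by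
      ext ξ
      simp only [Set.mem_setOf_eq, Set.Nonempty, Set.mem_inter_iff, Set.mem_prod, Set.mem_univ,
        true_and]
    rw [heq]
    exact hmeas
  · intro B hB
    have hG : MeasurableSet ({p : Z × Z | p.2 ∈ clarkeTangentCone K p.1} ∩ (Set.univ ×ˢ B)) :=
      (measurable_clarkeGraph K hDc hDK hKD).inter (MeasurableSet.univ.prod hB)
    have hmeas := measurableSet_exists_of_graph μ hμ φ hφm _ hG
    have heq : {ξ | (clarkeTangentCone K (φ ξ) ∩ B).Nonempty} =
        {ξ | ∃ v, (φ ξ, v) ∈ ({p : Z × Z | p.2 ∈ clarkeTangentCone K p.1} ∩ (Set.univ ×ˢ B))} := by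
      ext ξ
      simp only [Set.mem_setOf_eq, Set.Nonempty, Set.mem_inter_iff, Set.mem_prod, Set.mem_univ,
        true_and]
    rw [heq]
    exact hmeas
end

section
/- Let K ⊆ Z be a subset of a Banach space, z ∈ K, v ∈ T_K(z) an adjacent tangent vector, and let T^{(2)}_K(z,v) = {h : lim_{ε→0⁺} dist(z + εv + ε²h, K)/ε² = 0} be the second-order adjacent set. Then C_K(z) + T^{(2)}_K(z,v) ⊆ T^{(2)}_K(z,v), where C_K(z) is the Clarke tangent cone of K at z. -/
open Metric
open scoped Pointwise

/-- The second-order adjacent set to `K` at `(z, v)`: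
`h ∈ T²_K(z,v)` iff `dist(z + t•v + t²•h, K)/t² → 0` as `t → 0⁺`. -/
def secondAdjacentSet {Z : Type*} [NormedAddCommGroup Z] [NormedSpace ℝ Z]
    (K : Set Z) (z v : Z) : Set Z :=
  {h | ∀ ε > (0 : ℝ), ∃ δ > (0 : ℝ), ∀ t : ℝ, 0 < t → t < δ →
    infDist (z + t • v + (t ^ 2) • h) K < ε * t ^ 2}

/-- `C_K(z) + T²_K(z,v) ⊆ T²_K(z,v)` for `z ∈ K` and `v` in the adjacent cone. -/
theorem clarke_add_secondAdjacent_subset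
    {Z : Type*} [NormedAddCommGroup Z] [NormedSpace ℝ Z]
    (K : Set Z) (z : Z) (hz : z ∈ K) (v : Z) (hv : v ∈ adjacentCone K z) :
    clarkeTangentCone K z + secondAdjacentSet K z v ⊆ secondAdjacentSet K z v := by
  rintro x ⟨w, hw, h, hh, rfl⟩
  intro ε hε
  -- Clarke cone estimate with ε/2
  obtain ⟨δ₁, hδ₁, H₁⟩ := hw (ε / 2) (by linarith)
  -- second-order estimate with ε/4
  obtain ⟨δ₂, hδ₂, H₂⟩ := hh (ε / 4) (by linarith)
  set M : ℝ := ε / 4 + ‖v‖ + ‖h‖ + 1 with hM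
  have hM1 : (1 : ℝ) ≤ M := by
    rw [hM]; have := norm_nonneg v; have := norm_nonneg h; linarith
  have hMpos : (0 : ℝ) < M := by linarith
  refine ⟨min (min δ₂ 1) (δ₁ / M), ?_, ?_⟩
  · exact lt_min (lt_min hδ₂ one_pos) (div_pos hδ₁ hMpos)
  intro t ht htδ
  have ht2 : 0 < t ^ 2 := by positivity
  have htδ₂ : t < δ₂ := lt_of_lt_of_le htδ (le_trans (min_le_left _ _) (min_le_left _ _))
  have ht1 : t < 1 := lt_of_lt_of_le htδ (le_trans (min_le_left _ _) (min_le_right _ _))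
  have htδ₁M : t < δ₁ / M := lt_of_lt_of_le htδ (min_le_right _ _)
  have htMδ₁ : t * M < δ₁ := (lt_div_iff₀ hMpos).mp htδ₁M
  have htδ₁ : t < δ₁ := lt_of_lt_of_le htδ₁M (by
    rw [div_le_iff₀ hMpos]; nlinarith)
  -- pick a point of K close to z + t v + t² h
  have h2 := H₂ t ht htδ₂
  obtain ⟨y, hyK, hy⟩ := (infDist_lt_iff ⟨z, hz⟩).mp h2
  have hyz : ‖y - z‖ < δ₁ := by
    have : ‖y - z‖ ≤ dist (z + t • v + t ^ 2 • h) y + ‖t • v‖ + ‖t ^ 2 • h‖ := by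
      rw [dist_eq_norm]
      calc ‖y - z‖ = ‖-(z + t • v + t ^ 2 • h - y) + t • v + t ^ 2 • h‖ := by
            congr 1; abel
        _ ≤ ‖-(z + t • v + t ^ 2 • h - y)‖ + ‖t • v‖ + ‖t ^ 2 • h‖ := by
            exact norm_add₃_le
        _ = ‖z + t • v + t ^ 2 • h - y‖ + ‖t • v‖ + ‖t ^ 2 • h‖ := by rw [norm_neg]
    have hn : ‖t • v‖ = t * ‖v‖ := by
      rw [norm_smul, Real.norm_eq_abs, abs_of_pos ht]
    have hn2 : ‖t ^ 2 • h‖ = t ^ 2 * ‖h‖ := by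
      rw [norm_smul, Real.norm_eq_abs, abs_of_pos ht2]
    have hb : dist (z + t • v + t ^ 2 • h) y + ‖t • v‖ + ‖t ^ 2 • h‖ < t * M := by
      rw [hn, hn2, hM]
      have h1 : dist (z + t • v + t ^ 2 • h) y < ε / 4 * t ^ 2 := hy
      nlinarith [norm_nonneg v, norm_nonneg h, mul_pos ht hε,
        mul_nonneg (mul_nonneg ht.le (by linarith : (0:ℝ) ≤ 1 - t))
          (by positivity : (0:ℝ) ≤ ε / 4 + ‖h‖)]
    linarith
  have ht2δ₁ : t ^ 2 < δ₁ := lt_of_le_of_lt (by nlinarith) htδ₁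
  have h1 := H₁ (t ^ 2) ht2 ht2δ₁ y hyK hyz
  -- combine
  have key : infDist (z + t • v + t ^ 2 • (w + h)) K
      ≤ infDist (y + t ^ 2 • w) K + dist (z + t • v + t ^ 2 • (w + h)) (y + t ^ 2 • w) :=
    infDist_le_infDist_add_dist
  have hd : dist (z + t • v + t ^ 2 • (w + h)) (y + t ^ 2 • w)
      = dist (z + t • v + t ^ 2 • h) y := by
    rw [dist_eq_norm, dist_eq_norm, smul_add]
    congr 1
    abel
  rw [hd] at key
  calc infDist (z + t • v + t ^ 2 • (w + h)) K
      ≤ infDist (y + t ^ 2 • w) K + dist (z + t • v + t ^ 2 • h) y := key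
    _ < ε / 2 * t ^ 2 + ε / 4 * t ^ 2 := add_lt_add h1 hy
    _ < ε * t ^ 2 := by nlinarith
end
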